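/- For all natural numbers i ≥ 1 and all complex numbers t, x: Σ_{k=1}^{i} Σ_{i_1+⋯+i_k=i} p_{i_1,…,i_k}(t) · x^k = (xt+1)(x(t−1)+1)⋯(x(t−i+2)+1) · x(t−i+1), where the inner sum runs over compositions of i of length k. -/

import Mathlib

open Finset

/-- `p_{i_1,…,i_k}(t) = (t−i_1+1)(t−i_1−i_2+1)⋯(t−i+1)`, a product over the
partial sums of the list `l = (i_1,…,i_k)`. -/
noncomputable def pProd (l : List ℕ) (t : ℂ) : ℂ :=
  ∏ j ∈ Finset.range l.length, (t - ((l.take (j + 1)).sum : ℂ) + 1)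


lemma pProd_cons (a : ℕ) (l : List ℕ) (t : ℂ) :
    pProd (a :: l) t = (t - a + 1) * pProd l (t - a) := by
  unfold pProd
  rw [List.length_cons, Finset.prod_range_succ']
  simp only [List.take_succ_cons, List.sum_cons, Nat.cast_add, List.take_zero,
    List.take_cons, List.sum_nil, Nat.cast_zero]
  rw [mul_comm]
  congr 1
  · norm_num
  · exact Finset.prod_congr rfl fun j _ => by ring_nf

lemma headI_cons_tail' {α : Type*} [Inhabited α] (l : List α) (h : l ≠ []) :
    l.headI :: l.tail = l := by
  cases l with
  | nil => exact absurd rfl h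
  | cons a l => rfl

lemma blocks_ne_nil {n : ℕ} (hn : 1 ≤ n) (c : Composition n) : c.blocks ≠ [] := by
  intro h
  have := c.blocks_sum
  rw [h] at this
  simp at this
  omega

lemma headI_pos {n : ℕ} (hn : 1 ≤ n) (c : Composition n) : 0 < c.blocks.headI :=
  c.blocks_pos (by
    conv => rw [← headI_cons_tail' _ (blocks_ne_nil hn c)]
    exact List.mem_cons_self)

/-- prepend a block `1` -/
def phi1 {n : ℕ} (c : Composition n) : Composition (n + 1) :=
  ⟨1 :: c.blocks, fun h => by
    rcases List.mem_cons.1 h with h | h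
    · simp [h]
    · exact c.blocks_pos h, by simp [c.blocks_sum, Nat.add_comm]⟩

/-- add `1` to the first block -/
def phi2 {n : ℕ} (hn : 1 ≤ n) (c : Composition n) : Composition (n + 1) :=
  ⟨(c.blocks.headI + 1) :: c.blocks.tail, fun h => by
    rcases List.mem_cons.1 h with h | h
    · omega
    · exact c.blocks_pos (List.mem_of_mem_tail h), by
    have h2 : (c.blocks.headI :: c.blocks.tail).sum = n := by
      rw [headI_cons_tail' _ (blocks_ne_nil hn c), c.blocks_sum]
    simp at h2 ⊢; omega⟩

def phi {n : ℕ} (hn : 1 ≤ n) : Composition n ⊕ Composition n → Composition (n + 1)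
  | Sum.inl c => phi1 c
  | Sum.inr c => phi2 hn c

lemma phi_bij {n : ℕ} (hn : 1 ≤ n) : Function.Bijective (phi hn) := by
  constructor
  · rintro (c | c) (d | d) h <;>
      simp only [phi, phi1, phi2, Composition.mk.injEq, List.cons.injEq] at h
    · exact congrArg Sum.inl (Composition.ext h.2)
    · exact absurd h.1.symm (by have := headI_pos hn d; omega)
    · exact absurd h.1 (by have := headI_pos hn c; omega)
    · refine congrArg Sum.inr (Composition.ext ?_)
      rw [← headI_cons_tail' _ (blocks_ne_nil hn c),
          ← headI_cons_tail' _ (blocks_ne_nil hn d)]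
      rw [h.2]
      congr 1
      omega
  · intro c
    obtain ⟨a, l, hal⟩ : ∃ a l, c.blocks = a :: l :=
      List.exists_cons_of_ne_nil (blocks_ne_nil (by omega) c)
    have hsum : a + l.sum = n + 1 := by
      have := c.blocks_sum; rw [hal] at this; simpa using this
    have ha : 0 < a := c.blocks_pos (hal ▸ List.mem_cons_self)
    rcases Nat.lt_or_ge a 2 with h2 | h2
    · -- a = 1, use inl
      have ha1 : a = 1 := by omega
      refine ⟨Sum.inl ⟨l, fun h => c.blocks_pos (hal ▸ List.mem_cons_of_mem _ h), by omega⟩, ?_⟩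
      apply Composition.ext
      simp [phi, phi1, hal, ha1]
    · -- a ≥ 2, use inr with (a-1) :: l
      refine ⟨Sum.inr ⟨(a - 1) :: l,
        fun h => by
          rcases List.mem_cons.1 h with h | h
          · omega
          · exact c.blocks_pos (hal ▸ List.mem_cons_of_mem _ h), by simp; omega⟩, ?_⟩
      apply Composition.ext
      simp [phi, phi2, hal]
      omega

lemma step (x t : ℂ) (n : ℕ) (hn : 1 ≤ n) :
    ∑ c : Composition (n + 1), pProd c.blocks t * x ^ c.length
      = (x * t + 1) * ∑ c : Composition n, pProd c.blocks (t - 1) * x ^ c.length := by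
  have key := Fintype.sum_bijective (phi hn) (phi_bij hn)
    (fun y => pProd (phi hn y).blocks t * x ^ (phi hn y).length)
    (fun c => pProd c.blocks t * x ^ c.length) (fun y => rfl)
  rw [← key, Fintype.sum_sum_type]
  have h1 : ∀ c : Composition n,
      pProd (phi hn (Sum.inl c)).blocks t * x ^ (phi hn (Sum.inl c)).length
        = x * t * (pProd c.blocks (t - 1) * x ^ c.length) := by
    intro c
    show pProd (1 :: c.blocks) t * x ^ (1 :: c.blocks).length = _
    rw [pProd_cons]
    simp only [Nat.cast_one, List.length_cons, Composition.length]
    ring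
  have h2 : ∀ c : Composition n,
      pProd (phi hn (Sum.inr c)).blocks t * x ^ (phi hn (Sum.inr c)).length
        = pProd c.blocks (t - 1) * x ^ c.length := by
    intro c
    have hct := headI_cons_tail' c.blocks (blocks_ne_nil hn c)
    have hl : ((c.blocks.headI + 1) :: c.blocks.tail).length = c.length := by
      rw [Composition.length, ← hct]
      simp
    show pProd ((c.blocks.headI + 1) :: c.blocks.tail) t
        * x ^ ((c.blocks.headI + 1) :: c.blocks.tail).length = _
    rw [hl]
    congr 1
    have e2 : t - (((c.blocks.headI + 1 : ℕ)) : ℂ) = t - 1 - (c.blocks.headI : ℂ) := by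
      push_cast; ring
    rw [pProd_cons, e2, ← hct]
    simp only [List.headI_cons, List.tail_cons, pProd_cons]
  rw [Finset.sum_congr rfl fun c _ => h1 c, Finset.sum_congr rfl fun c _ => h2 c,
    ← Finset.mul_sum]
  ring

lemma comp_one_blocks (c : Composition 1) : c.blocks = [1] := by
  rcases hl : c.blocks with _ | ⟨a, l⟩
  · have := c.blocks_sum; rw [hl] at this; simp at this
  · have hs := c.blocks_sum
    rw [hl] at hs
    simp only [List.sum_cons] at hs
    have ha : 0 < a := c.blocks_pos (hl ▸ List.mem_cons_self)
    have hl0 : l = [] := by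
      cases l with
      | nil => rfl
      | cons b m =>
        have hb : 0 < b := c.blocks_pos (hl ▸ List.mem_cons_of_mem _ (List.mem_cons_self))
        simp only [List.sum_cons] at hs
        omega
    subst hl0
    simp only [List.sum_nil, Nat.add_zero] at hs
    simp [hs]

/-- Summing `p_{i_1,…,i_k}(t)·x^k` over all compositions `(i_1,…,i_k)` of `i`
(grouping by length `k = 1,…,i`) gives
`(xt+1)(x(t−1)+1)⋯(x(t−i+2)+1)·x(t−i+1)`. -/
theorem stmt1 (i : ℕ) (hi : 1 ≤ i) (t x : ℂ) :
    ∑ c : Composition i, pProd c.blocks t * x ^ c.length =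
      (∏ j ∈ Finset.range (i - 1), (x * (t - (j : ℂ)) + 1)) * (x * (t - (i : ℂ) + 1)) := by
  induction i, hi using Nat.le_induction generalizing t with
  | base =>
    have : ∀ c : Composition 1, pProd c.blocks t * x ^ c.length = t * x := by
      intro c
      have hb := comp_one_blocks c
      rw [Composition.length, hb]
      simp [pProd]
    rw [Finset.sum_congr rfl fun c _ => this c, Finset.sum_const, Finset.card_univ,
      composition_card]
    simp
    ring
  | succ n hn ih =>
    obtain ⟨m, rfl⟩ : ∃ m, n = m + 1 := ⟨n - 1, by omega⟩
    rw [step x t (m + 1) hn, ih (t - 1)]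
    have hp : ∏ j ∈ Finset.range (m + 1), (x * (t - (j : ℂ)) + 1)
        = (∏ j ∈ Finset.range m, (x * ((t - 1) - (j : ℂ)) + 1)) * (x * t + 1) := by
      rw [Finset.prod_range_succ']
      simp only [Nat.cast_add, Nat.cast_one, Nat.cast_zero]
      congr 1
      · exact Finset.prod_congr rfl fun j _ => by ring_nf
      · ring_nf
    show _ = (∏ j ∈ Finset.range (m + 1), (x * (t - (j : ℂ)) + 1)) * _
    rw [hp]
    push_cast
    ring
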